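/- The number of walks of length n from (0,0) to (0,0) on D_3 satisfies the generating function identity (1 - 9t³ + 9t⁶ - 8t⁹)·F(t) = 1 - 8t³ + 5t⁶ - 2t⁹, where F(t) = Σ_{n≥0} f(n) t^n as a formal power series. -/

import Mathlib

/-- Directed edge of the graph `D_k`. -/
def Dedge (k : ℕ) (p q : ℕ × ℕ) : Prop :=
  p.1 + p.2 ≤ k ∧ q.1 + q.2 ≤ k ∧
    (q = (p.1, p.2 + 1) ∨ (q.1 + 1 = p.1 ∧ q.2 = p.2) ∨
      (q.1 = p.1 + 1 ∧ q.2 + 1 = p.2))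

/-- Walks of length `n` from `u` to `v` in `D_k`. -/
def Walk (k n : ℕ) (u v : ℕ × ℕ) : Type :=
  { f : Fin (n + 1) → ℕ × ℕ // f 0 = u ∧ f (Fin.last n) = v ∧
      ∀ i : Fin n, Dedge k (f i.castSucc) (f i.succ) }

/-- The number of walks of length `n` from `u` to `v` in `D_k`. -/
noncomputable def walkCount (k n : ℕ) (u v : ℕ × ℕ) : ℕ := Nat.card (Walk k n u v)

instance (k : ℕ) (p q : ℕ × ℕ) : Decidable (Dedge k p q) := by
  unfold Dedge; infer_instance

/-- Walks of length 0 are just proofs that `u = v`. -/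
def walkZeroEquiv (k : ℕ) (u v : ℕ × ℕ) : Walk k 0 u v ≃ PLift (u = v) where
  toFun f := ⟨by
    have h1 := f.2.1
    have h2 := f.2.2.1
    have h3 := congrArg f.1 (Fin.fin_one_eq_zero (Fin.last 0))
    exact h1.symm.trans (h3.symm.trans h2)⟩
  invFun h := ⟨fun _ => u, rfl, h.down, fun i => i.elim0⟩
  left_inv f := by
    apply Subtype.ext
    funext i
    rw [Fin.fin_one_eq_zero i]
    exact f.2.1.symm
  right_inv h := Subsingleton.elim _ _

/-- Splitting off the first step of a walk. -/
def walkEquiv (k n : ℕ) (u v : ℕ × ℕ) :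
    Walk k (n + 1) u v ≃ Σ w : {w : ℕ × ℕ // Dedge k u w}, Walk k n w v where
  toFun f :=
    ⟨⟨f.1 (Fin.succ 0), by
        have h := f.2.2.2 0
        rwa [Fin.castSucc_zero, f.2.1] at h⟩,
      ⟨fun i => f.1 i.succ, rfl, by
        show f.1 (Fin.last n).succ = v
        rw [Fin.succ_last]
        exact f.2.2.1, fun i => by
        show Dedge k (f.1 i.castSucc.succ) (f.1 i.succ.succ)
        have h := f.2.2.2 i.succ
        rwa [← Fin.succ_castSucc] at h⟩⟩
  invFun := fun ⟨⟨w, hw⟩, ⟨g, hg0, hgl, hge⟩⟩ =>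
    ⟨Fin.cases u g, by simp, by
      rw [← Fin.succ_last]
      simp only [Fin.cases_succ]
      exact hgl, fun i => by
      induction i using Fin.cases with
      | zero =>
          simp only [Fin.castSucc_zero, Fin.cases_zero, Fin.cases_succ, hg0]
          exact hw
      | succ j =>
          simp only [← Fin.succ_castSucc, Fin.cases_succ]
          exact hge j⟩
  left_inv f := by
    apply Subtype.ext
    funext i
    induction i using Fin.cases with
    | zero =>
        simp only [Fin.cases_zero]
        exact f.2.1.symm
    | succ j => simp
  right_inv := by
    rintro ⟨⟨w, hw⟩, g, hg0, hgl, hge⟩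
    have h : Fin.cases (motive := fun _ => ℕ × ℕ) u g (Fin.succ (0 : Fin (n + 1))) = w :=
      (Fin.cases_succ _).trans hg0
    subst h
    refine Sigma.ext rfl (heq_of_eq ?_)
    exact Subtype.ext (funext fun i => by simp)

instance (k : ℕ) (u : ℕ × ℕ) : Fintype {w : ℕ × ℕ // Dedge k u w} :=
  Fintype.subtype
    (({(u.1, u.2 + 1), (u.1 - 1, u.2), (u.1 + 1, u.2 - 1)} : Finset (ℕ × ℕ)).filter
      (fun w => Dedge k u w)) (by
    rintro ⟨a, b⟩
    simp only [Finset.mem_filter, Finset.mem_insert, Finset.mem_singleton, and_iff_right_iff_imp]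
    rintro ⟨h1, h2, h3⟩
    simp only [Prod.ext_iff] at h3 ⊢
    omega)

instance walkFintype : ∀ (n k : ℕ) (u v : ℕ × ℕ), Fintype (Walk k n u v)
  | 0, k, u, v => Fintype.ofEquiv _ (walkZeroEquiv k u v).symm
  | n + 1, k, u, v =>
    letI := fun (w : {w : ℕ × ℕ // Dedge k u w}) => walkFintype n k w v
    Fintype.ofEquiv _ (walkEquiv k n u v).symm

lemma walkCount_zero (k : ℕ) (u v : ℕ × ℕ) :
    walkCount k 0 u v = if u = v then 1 else 0 := by
  rw [walkCount, Nat.card_congr (walkZeroEquiv k u v)]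
  by_cases h : u = v
  · haveI : Unique (PLift (u = v)) := ⟨⟨⟨h⟩⟩, fun _ => Subsingleton.elim _ _⟩
    rw [Nat.card_unique, if_pos h]
  · haveI : IsEmpty (PLift (u = v)) := ⟨fun x => h x.down⟩
    rw [Nat.card_of_isEmpty, if_neg h]

/-- The ten vertices of `D₃`. -/
def e : Fin 10 → ℕ × ℕ :=
  ![(0,0),(0,1),(0,2),(0,3),(1,0),(1,1),(1,2),(2,0),(2,1),(3,0)]

lemma e_inj : Function.Injective e := by decide

lemma mem_image_e {w : ℕ × ℕ} (h : w.1 + w.2 ≤ 3) : w ∈ Finset.univ.image e := by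
  obtain ⟨a, b⟩ := w
  simp only at h
  have ha : a ≤ 3 := by omega
  have hb : b ≤ 3 := by omega
  interval_cases a <;> interval_cases b <;> first | decide | omega

lemma walkCount_succ (n : ℕ) (u v : ℕ × ℕ) :
    walkCount 3 (n + 1) u v
      = ∑ j : Fin 10, (if Dedge 3 u (e j) then 1 else 0) * walkCount 3 n (e j) v := by
  have hmem : ∀ x : ℕ × ℕ,
      x ∈ (Finset.univ.image e).filter (fun w => Dedge 3 u w) ↔ Dedge 3 u x := by
    intro x
    simp only [Finset.mem_filter, and_iff_right_iff_imp]
    exact fun hx => mem_image_e hx.2.1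
  have h1 : walkCount 3 (n + 1) u v = ∑ w : {w : ℕ × ℕ // Dedge 3 u w}, walkCount 3 n w v := by
    rw [walkCount, Nat.card_congr (walkEquiv 3 n u v), Nat.card_eq_fintype_card,
      Fintype.card_sigma]
    exact Finset.sum_congr rfl fun w _ => (Nat.card_eq_fintype_card).symm
  rw [h1, ← Finset.sum_subtype _ hmem (fun w => walkCount 3 n w v), Finset.sum_filter,
    Finset.sum_image (fun a _ b _ h => e_inj h)]
  exact Finset.sum_congr rfl fun j _ => by split <;> simp

/-- Transfer matrix of `D₃`. -/
def M : Matrix (Fin 10) (Fin 10) ℕ :=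
  Matrix.of fun i j => if Dedge 3 (e i) (e j) then 1 else 0

/-- Vector of walk counts to the origin. -/
noncomputable def vecf (n : ℕ) : Fin 10 → ℕ := fun j => walkCount 3 n (e j) (0, 0)

lemma vecf_succ (n : ℕ) : vecf (n + 1) = M.mulVec (vecf n) := by
  funext i
  show walkCount 3 (n + 1) (e i) (0, 0) = _
  rw [Matrix.mulVec, dotProduct]
  exact walkCount_succ n (e i) (0, 0)

lemma vecf_add (m n : ℕ) : vecf (m + n) = (M ^ m).mulVec (vecf n) := by
  induction m with
  | zero => rw [pow_zero, Matrix.one_mulVec, Nat.zero_add]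
  | succ m ih =>
      have h : m + 1 + n = (m + n) + 1 := by omega
      rw [h, vecf_succ, ih, Matrix.mulVec_mulVec, ← pow_succ']

lemma vecf_zero : vecf 0 = fun j => if j = 0 then 1 else 0 := by
  funext j
  show walkCount 3 0 (e j) (0, 0) = _
  rw [walkCount_zero]
  fin_cases j <;> decide

lemma fM (n : ℕ) : walkCount 3 n (0, 0) (0, 0) = (M ^ n) 0 0 := by
  have h : walkCount 3 n (0, 0) (0, 0) = vecf n 0 := rfl
  have h2 := vecf_add n 0
  rw [Nat.add_zero] at h2
  rw [h, h2, vecf_zero]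
  simp [Matrix.mulVec, dotProduct, mul_ite]

lemma key : ∀ j : Fin 10,
    (M ^ 10) j 0 + 9 * (M ^ 4) j 0 = 9 * (M ^ 7) j 0 + 8 * (M ^ 1) j 0 := by decide

lemma frec (n : ℕ) :
    walkCount 3 (n + 10) (0, 0) (0, 0) + 9 * walkCount 3 (n + 4) (0, 0) (0, 0)
      = 9 * walkCount 3 (n + 7) (0, 0) (0, 0) + 8 * walkCount 3 (n + 1) (0, 0) (0, 0) := by
  have hp : ∀ m : ℕ, walkCount 3 (n + m) (0, 0) (0, 0)
      = ∑ j : Fin 10, (M ^ n) 0 j * (M ^ m) j 0 := by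
    intro m
    rw [fM, pow_add, Matrix.mul_apply]
  rw [hp 10, hp 4, hp 7, hp 1]
  simp only [Finset.mul_sum, ← Finset.sum_add_distrib]
  refine Finset.sum_congr rfl fun j _ => ?_
  calc (M ^ n) 0 j * (M ^ 10) j 0 + 9 * ((M ^ n) 0 j * (M ^ 4) j 0)
      = (M ^ n) 0 j * ((M ^ 10) j 0 + 9 * (M ^ 4) j 0) := by ring
    _ = (M ^ n) 0 j * (9 * (M ^ 7) j 0 + 8 * (M ^ 1) j 0) := by rw [key j]
    _ = 9 * ((M ^ n) 0 j * (M ^ 7) j 0) + 8 * ((M ^ n) 0 j * (M ^ 1) j 0) := by ring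

lemma fval0 : walkCount 3 0 0 0 = 1 := by
  show walkCount 3 0 (0, 0) (0, 0) = 1; rw [fM]; decide
lemma fval1 : walkCount 3 1 0 0 = 0 := by
  show walkCount 3 1 (0, 0) (0, 0) = 0; rw [fM]; decide
lemma fval2 : walkCount 3 2 0 0 = 0 := by
  show walkCount 3 2 (0, 0) (0, 0) = 0; rw [fM]; decide
lemma fval3 : walkCount 3 3 0 0 = 1 := by
  show walkCount 3 3 (0, 0) (0, 0) = 1; rw [fM]; decide
lemma fval4 : walkCount 3 4 0 0 = 0 := by
  show walkCount 3 4 (0, 0) (0, 0) = 0; rw [fM]; decide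
lemma fval5 : walkCount 3 5 0 0 = 0 := by
  show walkCount 3 5 (0, 0) (0, 0) = 0; rw [fM]; decide
lemma fval6 : walkCount 3 6 0 0 = 5 := by
  show walkCount 3 6 (0, 0) (0, 0) = 5; rw [fM]; decide
lemma fval7 : walkCount 3 7 0 0 = 0 := by
  show walkCount 3 7 (0, 0) (0, 0) = 0; rw [fM]; decide
lemma fval8 : walkCount 3 8 0 0 = 0 := by
  show walkCount 3 8 (0, 0) (0, 0) = 0; rw [fM]; decide
lemma fval9 : walkCount 3 9 0 0 = 42 := by
  show walkCount 3 9 (0, 0) (0, 0) = 42; rw [fM]; decide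

/-- Generating function identity for closed walks at `(0,0)` in `D_3`:
`(1 - 9t³ + 9t⁶ - 8t⁹)·F(t) = 1 - 8t³ + 5t⁶ - 2t⁹`. -/
theorem stmt6 :
    (1 - 9 * (PowerSeries.X : PowerSeries ℚ) ^ 3 + 9 * PowerSeries.X ^ 6 -
          8 * PowerSeries.X ^ 9) *
        PowerSeries.mk (fun n => (walkCount 3 n (0, 0) (0, 0) : ℚ)) =
      1 - 8 * PowerSeries.X ^ 3 + 5 * PowerSeries.X ^ 6 - 2 * PowerSeries.X ^ 9 := by
  set F : PowerSeries ℚ := PowerSeries.mk (fun n => (walkCount 3 n (0, 0) (0, 0) : ℚ)) with hF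
  have h2 : PowerSeries.C (R := ℚ) 2 = 2 := map_ofNat _ 2
  have h5 : PowerSeries.C (R := ℚ) 5 = 5 := map_ofNat _ 5
  have h8 : PowerSeries.C (R := ℚ) 8 = 8 := map_ofNat _ 8
  have h9 : PowerSeries.C (R := ℚ) 9 = 9 := map_ofNat _ 9
  have hL : (1 - 9 * (PowerSeries.X : PowerSeries ℚ) ^ 3 + 9 * PowerSeries.X ^ 6 -
      8 * PowerSeries.X ^ 9) * F
      = F - PowerSeries.C (R := ℚ) 9 * (F * PowerSeries.X ^ 3)
          + PowerSeries.C (R := ℚ) 9 * (F * PowerSeries.X ^ 6)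
          - PowerSeries.C (R := ℚ) 8 * (F * PowerSeries.X ^ 9) := by
    rw [h8, h9]; ring
  have hR : (1 - 8 * PowerSeries.X ^ 3 + 5 * PowerSeries.X ^ 6 -
      2 * (PowerSeries.X : PowerSeries ℚ) ^ 9)
      = 1 - PowerSeries.C (R := ℚ) 8 * PowerSeries.X ^ 3 + PowerSeries.C (R := ℚ) 5 * PowerSeries.X ^ 6
          - PowerSeries.C (R := ℚ) 2 * PowerSeries.X ^ 9 := by
    rw [h2, h5, h8]
  rw [hL, hR]
  ext n
  simp only [map_sub, map_add, PowerSeries.coeff_C_mul, PowerSeries.coeff_mul_X_pow',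
    PowerSeries.coeff_mk, PowerSeries.coeff_one, PowerSeries.coeff_C,
    PowerSeries.coeff_X_pow, hF]
  rcases lt_or_ge n 10 with h | h
  · interval_cases n <;>
      norm_num [Prod.mk_zero_zero, fval0, fval1, fval2, fval3, fval4, fval5, fval6, fval7, fval8, fval9]
  · have e10 : n - 10 + 10 = n := by omega
    have e7 : n - 10 + 7 = n - 3 := by omega
    have e4 : n - 10 + 4 = n - 6 := by omega
    have e1 : n - 10 + 1 = n - 9 := by omega
    have hrec := frec (n - 10)
    rw [e10, e7, e4, e1] at hrec
    have hq : (walkCount 3 n (0, 0) (0, 0) : ℚ) + 9 * (walkCount 3 (n - 6) (0, 0) (0, 0) : ℚ)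
        = 9 * (walkCount 3 (n - 3) (0, 0) (0, 0) : ℚ)
          + 8 * (walkCount 3 (n - 9) (0, 0) (0, 0) : ℚ) := by
      exact_mod_cast congrArg (fun m : ℕ => (m : ℚ)) hrec
    simp only [if_pos (show 3 ≤ n by omega), if_pos (show 6 ≤ n by omega),
      if_pos (show 9 ≤ n by omega), if_neg (show ¬ n = 0 by omega),
      if_neg (show ¬ n - 3 = 0 by omega), if_neg (show ¬ n - 6 = 0 by omega),
      if_neg (show ¬ n - 9 = 0 by omega)]
    linarith
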